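/- Let A ∈ M_d(ℂ), θ ∈ ℝ, X_m(θ) the maximal eigenspace of A(θ) = Re(e^{−iθ}A), and let P be the orthogonal projection onto X_m(θ). The exposed face F of W(A) with outward normal e^{iθ} equals { e^{iθ}(λ_m(θ) + i·μ) : μ ∈ W(P·Im(e^{−iθ}A)·P restricted to X_m(θ)) }, i.e., the face is an isometric affine copy of the numerical range of the compression of Im(e^{−iθ}A) to X_m(θ). -/

import Mathlib

open Matrix Complex

/-- Numerical range map `f_A(x) = x* A x`. -/
noncomputable def nrMap {d : ℕ} (A : Matrix (Fin d) (Fin d) ℂ) (x : Fin d → ℂ) : ℂ :=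
  star x ⬝ᵥ A *ᵥ x

/-- Real part `Re(A) = (A + A*)/2`. -/
noncomputable def reP {d : ℕ} (A : Matrix (Fin d) (Fin d) ℂ) : Matrix (Fin d) (Fin d) ℂ :=
  ((2:ℂ)⁻¹) • (A + Aᴴ)

/-- Imaginary part `Im(A) = (A - A*)/(2i)`. -/
noncomputable def imP {d : ℕ} (A : Matrix (Fin d) (Fin d) ℂ) : Matrix (Fin d) (Fin d) ℂ :=
  (((2:ℂ) * Complex.I)⁻¹) • (A - Aᴴ)

/-- `A(θ) = cos θ · Re(A) + sin θ · Im(A)`. -/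
noncomputable def Ath {d : ℕ} (A : Matrix (Fin d) (Fin d) ℂ) (θ : ℝ) :
    Matrix (Fin d) (Fin d) ℂ :=
  Real.cos θ • reP A + Real.sin θ • imP A

/-- Numerical range `W(A)`. -/
noncomputable def numRange {d : ℕ} (A : Matrix (Fin d) (Fin d) ℂ) : Set ℂ :=
  {z : ℂ | ∃ x : Fin d → ℂ, star x ⬝ᵥ x = 1 ∧ z = nrMap A x}

variable {d : ℕ}

lemma herm_reP (A : Matrix (Fin d) (Fin d) ℂ) : (reP A).IsHermitian := by
  simp [Matrix.IsHermitian, reP, conjTranspose_smul, conjTranspose_add, add_comm, star_inv₀]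

lemma herm_imP (A : Matrix (Fin d) (Fin d) ℂ) : (imP A).IsHermitian := by
  unfold Matrix.IsHermitian imP
  ext i j
  simp only [conjTranspose_apply, Matrix.smul_apply, Matrix.sub_apply, conjTranspose_apply,
    smul_eq_mul, star_mul', star_inv₀, star_sub, star_star, Complex.star_def, Complex.conj_I,
    _root_.map_mul, map_ofNat, Complex.inv_I, Complex.conj_conj]
  have h2 : ((2:ℂ)*Complex.I)⁻¹ = -(2:ℂ)⁻¹ * Complex.I := by
    rw [mul_inv, Complex.inv_I]; ring
  have h3 : ((2:ℂ) * -Complex.I)⁻¹ = (2:ℂ)⁻¹ * Complex.I := by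
    rw [mul_inv, inv_neg, Complex.inv_I]; ring
  rw [h2, h3]
  ring

lemma herm_Ath (A : Matrix (Fin d) (Fin d) ℂ) (θ : ℝ) : (Ath A θ).IsHermitian := by
  simp [Matrix.IsHermitian, Ath, conjTranspose_smul, conjTranspose_add,
    (herm_reP A).eq, (herm_imP A).eq]

lemma decomp (M : Matrix (Fin d) (Fin d) ℂ) : reP M + Complex.I • imP M = M := by
  ext i j
  simp only [reP, imP, Matrix.add_apply, Matrix.smul_apply, Matrix.sub_apply, smul_eq_mul,
    conjTranspose_apply]
  have h2 : ((2:ℂ)*Complex.I)⁻¹ = -(2:ℂ)⁻¹ * Complex.I := by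
    rw [mul_inv, Complex.inv_I]; ring
  rw [h2]
  linear_combination (-(2:ℂ)⁻¹*(M i j - star (M j i))) * Complex.I_sq

lemma reP_exp (A : Matrix (Fin d) (Fin d) ℂ) (θ : ℝ) :
    reP (Complex.exp (-(θ:ℂ) * Complex.I) • A) = Ath A θ := by
  ext i j
  have he : Complex.exp (-(θ:ℂ) * Complex.I) = (Real.cos θ : ℂ) - (Real.sin θ : ℂ) * Complex.I := by
    rw [Complex.exp_mul_I]
    push_cast
    simp [Complex.cos_neg, Complex.sin_neg]
    ring
  simp only [reP, imP, Ath, Matrix.add_apply, Matrix.smul_apply, Matrix.sub_apply,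
    conjTranspose_apply, smul_eq_mul, he, star_mul', star_sub, Complex.star_def,
    Complex.conj_I, Complex.conj_ofReal, Complex.real_smul]
  have h2 : ((2:ℂ)*Complex.I)⁻¹ = -(2:ℂ)⁻¹ * Complex.I := by
    rw [mul_inv, Complex.inv_I]; ring
  rw [h2]
  ring

lemma herm_quad_real {H : Matrix (Fin d) (Fin d) ℂ} (hH : H.IsHermitian) (x : Fin d → ℂ) :
    (starRingEnd ℂ) (star x ⬝ᵥ H *ᵥ x) = star x ⬝ᵥ H *ᵥ x := by
  have h1 : star (star x ⬝ᵥ H *ᵥ x) = star (H *ᵥ x) ⬝ᵥ star (star x) :=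
    (star_dotProduct_star (H *ᵥ x) (star x)).symm
  rw [star_star, star_mulVec, hH.eq] at h1
  rw [Complex.star_def] at h1
  rw [h1, ← Matrix.dotProduct_mulVec]

open scoped ComplexOrder in
lemma rayleigh_eig (H : Matrix (Fin d) (Fin d) ℂ) (hH : H.IsHermitian) (lam : ℝ)
    (hub : ∀ μ : ℝ, (∃ v : Fin d → ℂ, v ≠ 0 ∧ H *ᵥ v = (μ:ℂ) • v) → μ ≤ lam)
    (x : Fin d → ℂ) (hx : star x ⬝ᵥ x = 1) (hR : star x ⬝ᵥ H *ᵥ x = (lam:ℂ)) :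
    H *ᵥ x = (lam:ℂ) • x := by
  set M := (lam:ℂ) • (1 : Matrix (Fin d) (Fin d) ℂ) - H with hMdef
  have hM : M.IsHermitian := by
    unfold Matrix.IsHermitian
    rw [hMdef, conjTranspose_sub, conjTranspose_smul, conjTranspose_one, hH.eq]
    simp [Complex.star_def, Complex.conj_ofReal]
  have hMps : M.PosSemidef := by
    apply hM.posSemidef_iff_eigenvalues_nonneg.mpr
    intro i
    have hv := hM.mulVec_eigenvectorBasis i
    set v := ⇑(hM.eigenvectorBasis i) with hvdef
    have hvne : v ≠ 0 := by
      have h5 := hM.eigenvectorBasis.orthonormal.ne_zero i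
      intro h
      exact h5 (by ext k; exact congrFun h k)
    have hMv : M *ᵥ v = ((hM.eigenvalues i : ℝ) : ℂ) • v := by simpa using hv
    have hHv : H *ᵥ v = ((lam - hM.eigenvalues i : ℝ) : ℂ) • v := by
      have h4 : H *ᵥ v = (lam:ℂ) • v - M *ᵥ v := by
        rw [hMdef, sub_mulVec, smul_mulVec, one_mulVec, sub_sub_cancel]
      rw [h4, hMv, ← sub_smul]
      norm_cast
    have h6 := hub _ ⟨v, hvne, hHv⟩
    show (0:ℝ) ≤ _
    linarith
  have h0 : star x ⬝ᵥ M *ᵥ x = 0 := by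
    rw [hMdef, sub_mulVec, smul_mulVec, one_mulVec, dotProduct_sub, hR]
    simp [dotProduct_smul, hx]
  have h7 := (hMps.dotProduct_mulVec_zero_iff x).mp h0
  rw [hMdef, sub_mulVec, smul_mulVec, one_mulVec, sub_eq_zero] at h7
  exact h7.symm

lemma conj_exp_theta (θ : ℝ) :
    (starRingEnd ℂ) (Complex.exp ((θ:ℂ) * Complex.I)) = Complex.exp (-(θ:ℂ) * Complex.I) := by
  rw [← Complex.exp_conj]
  congr 1
  simp [Complex.conj_ofReal]

lemma exp_mul_exp_neg (θ : ℝ) :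
    Complex.exp ((θ:ℂ) * Complex.I) * Complex.exp (-(θ:ℂ) * Complex.I) = 1 := by
  rw [← Complex.exp_add]
  ring_nf
  exact Complex.exp_zero

lemma keyid (A : Matrix (Fin d) (Fin d) ℂ) (θ : ℝ) (x : Fin d → ℂ) :
    nrMap A x * (starRingEnd ℂ) (Complex.exp ((θ:ℂ) * Complex.I))
      = nrMap (Ath A θ) x
        + Complex.I * nrMap (imP (Complex.exp (-(θ:ℂ) * Complex.I) • A)) x := by
  rw [conj_exp_theta]
  set c := Complex.exp (-(θ:ℂ) * Complex.I)
  have h1 : nrMap A x * c = nrMap (c • A) x := by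
    simp [nrMap, smul_mulVec, dotProduct_smul, mul_comm]
  have h2 : nrMap (c • A) x = nrMap (reP (c • A)) x + Complex.I * nrMap (imP (c • A)) x := by
    conv_lhs => rw [← decomp (c • A)]
    simp [nrMap, add_mulVec, dotProduct_add, smul_mulVec, dotProduct_smul]
  rw [h1, h2, reP_exp]


/-- The exposed face of `W(A)` with outward normal `e^{iθ}` equals the isometric affine
copy `e^{iθ}(λ_m(θ) + i·W(Im(e^{-iθ}A)|_{X_m(θ)}))` of the numerical range of the
compression of `Im(e^{-iθ}A)` to the maximal eigenspace `X_m(θ)` of `A(θ)`.  (Note that for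
a unit vector `y ∈ X_m(θ)` one has `y*(P B P)y = y*By`, so the numerical range of the
compression is the set of Rayleigh quotients of `Im(e^{-iθ}A)` over unit vectors of `X_m(θ)`.) -/
theorem stmt12 {d : ℕ} (A : Matrix (Fin d) (Fin d) ℂ) (θ : ℝ) (lam : ℝ)
    (hmax : IsGreatest {μ : ℝ | ∃ v : Fin d → ℂ, v ≠ 0 ∧ Ath A θ *ᵥ v = (μ:ℂ) • v} lam) :
    {β ∈ numRange A | (β * (starRingEnd ℂ) (Complex.exp (θ * Complex.I))).re = lam}
      = {β : ℂ | ∃ y : Fin d → ℂ, star y ⬝ᵥ y = 1 ∧ Ath A θ *ᵥ y = (lam:ℂ) • y ∧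
          β = Complex.exp (θ * Complex.I) * ((lam : ℂ) +
            Complex.I * nrMap (imP (Complex.exp (-(θ:ℂ) * Complex.I) • A)) y)} := by
  have hec := exp_mul_exp_neg θ
  have hce := conj_exp_theta θ
  set e := Complex.exp ((θ:ℂ) * Complex.I) with hedef
  set c := Complex.exp (-(θ:ℂ) * Complex.I) with hcdef
  ext β
  simp only [Set.mem_setOf_eq, Set.mem_sep_iff, numRange]
  constructor
  · rintro ⟨⟨x, hx, rfl⟩, hre⟩
    set s := nrMap (imP (c • A)) x with hsdef
    set r := nrMap (Ath A θ) x with hrdef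
    have hkey := keyid A θ x
    have hsre : (starRingEnd ℂ) s = s := herm_quad_real (herm_imP _) x
    have hrre : (starRingEnd ℂ) r = r := herm_quad_real (herm_Ath A θ) x
    have hsim : s.im = 0 := Complex.conj_eq_iff_im.mp hsre
    have hrim : r.im = 0 := Complex.conj_eq_iff_im.mp hrre
    have hre' : r.re = lam := by
      rw [hkey] at hre
      rw [Complex.add_re, Complex.mul_re, Complex.I_re, Complex.I_im, hsim] at hre
      simpa using hre
    have hr : r = (lam : ℂ) := Complex.ext (by simpa using hre') (by simpa using hrim)
    have hev : Ath A θ *ᵥ x = (lam : ℂ) • x := by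
      refine rayleigh_eig _ (herm_Ath A θ) lam (fun μ hμ => hmax.2 hμ) x hx ?_
      exact hr
    refine ⟨x, hx, hev, ?_⟩
    linear_combination e * hkey - e * (nrMap A x) * hce - (nrMap A x) * hec + e * hr
  · rintro ⟨y, hy, hev, rfl⟩
    set s := nrMap (imP (c • A)) y with hsdef
    have hsre : (starRingEnd ℂ) s = s := herm_quad_real (herm_imP _) y
    have hsim : s.im = 0 := Complex.conj_eq_iff_im.mp hsre
    have hr : nrMap (Ath A θ) y = (lam : ℂ) := by
      rw [nrMap, hev]
      simp [dotProduct_smul, hy]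
    have hkey := keyid A θ y
    constructor
    · refine ⟨y, hy, ?_⟩
      linear_combination - e * hkey + e * (nrMap A y) * hce + (nrMap A y) * hec - e * hr
    · have h1 : (e * ((lam:ℂ) + Complex.I * s)) * (starRingEnd ℂ) e = (lam:ℂ) + Complex.I * s := by
        rw [hce]
        linear_combination ((lam:ℂ) + Complex.I * s) * hec
      rw [h1]
      simp [Complex.add_re, Complex.mul_re, Complex.I_re, Complex.I_im, hsim]
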